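/- Let a, b, k be nonnegative integers with k ≤ min(a,b). Then the poset (A_k([a] × [b]), ≤_k) of k-element antichains of [a] × [b] is isomorphic to the poset D_k(a,b) of Ferrers diagrams of Durfee length exactly k contained in [a] × [b], ordered by inclusion. -/

import Mathlib

/-- The product poset `[a] × [b]` of the chains `{1,…,a}` and `{1,…,b}`,
with the componentwise order, viewed inside `ℤ₊²`. -/
abbrev Box (a b : ℕ) : Type :=
  {p : ℕ × ℕ // (1 ≤ p.1 ∧ p.1 ≤ a) ∧ (1 ≤ p.2 ∧ p.2 ≤ b)}

/-- A Ferrers diagram: a finite order ideal (downward-closed subset) of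
`ℤ₊² = {(i,j) : i,j ≥ 1}` with the componentwise order. -/
def IsFerrers (D : Finset (ℕ × ℕ)) : Prop :=
  (∀ p ∈ D, 1 ≤ p.1 ∧ 1 ≤ p.2) ∧
  (∀ p ∈ D, ∀ q : ℕ × ℕ, 1 ≤ q.1 → 1 ≤ q.2 → q.1 ≤ p.1 → q.2 ≤ p.2 → q ∈ D)

/-- The Durfee length of a diagram `D`: the largest `k` with `[k] × [k] ⊆ D`. -/
noncomputable def durfee (D : Finset (ℕ × ℕ)) : ℕ :=
  sSup {k : ℕ | ∀ i j : ℕ, 1 ≤ i → i ≤ k → 1 ≤ j → j ≤ k → (i, j) ∈ D}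

/-- The poset `D_k(a,b)` of Ferrers diagrams of Durfee length exactly `k` contained in
`[a] × [b]`, ordered by inclusion. -/
abbrev DkP (a b k : ℕ) : Type :=
  {D : Finset (ℕ × ℕ) // IsFerrers D ∧ durfee D = k ∧ ∀ p ∈ D, p.1 ≤ a ∧ p.2 ≤ b}


/-- `A_k(P)`: the set of antichains of `P` of cardinality exactly `k`. -/
def AkSet (P : Type*) [PartialOrder P] (k : ℕ) : Type _ :=
  {A : Finset P // IsAntichain (· ≤ ·) (A : Set P) ∧ A.card = k}

/-- The underlying finite set of elements of an antichain in `A_k(P)`. -/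
def AkSet.carrier {P : Type*} [PartialOrder P] {k : ℕ} (A : AkSet P k) : Finset P :=
  Subtype.val A

/-- `A ≺_k B` iff `A \ B = {a}` and `B \ A = {b}` are singletons with `a <_P b`. -/
def PrecK {P : Type*} [PartialOrder P] {k : ℕ} (A B : AkSet P k) : Prop :=
  ∃ a b : P,
    ((A.carrier : Set P) \ (B.carrier : Set P)) = {a} ∧
    ((B.carrier : Set P) \ (A.carrier : Set P)) = {b} ∧ a < b

/-- `≤_k`: the reflexive transitive closure of `≺_k` on `A_k(P)`. -/
def LeK {P : Type*} [PartialOrder P] {k : ℕ} : AkSet P k → AkSet P k → Prop :=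
  Relation.ReflTransGen PrecK

/-- `A_k(P)` is equipped with the order `≤_k`. -/
instance {P : Type*} [PartialOrder P] {k : ℕ} : LE (AkSet P k) := ⟨LeK⟩

namespace Stmt15

/-! ### Generalities -/

def rev {k : ℕ} (i : Fin k) : Fin k := ⟨k - 1 - i.val, by have := i.2; omega⟩

@[simp] lemma rev_val {k : ℕ} (i : Fin k) : (rev i).val = k - 1 - i.val := rfl

@[simp] lemma rev_rev {k : ℕ} (i : Fin k) : rev (rev i) = i := by
  have := i.2; apply Fin.ext; simp [rev]; omega

lemma rev_lt_rev {k : ℕ} {i j : Fin k} (h : i < j) : rev j < rev i := by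
  have := i.2; have := j.2
  simp only [rev, Fin.mk_lt_mk, Fin.lt_def] at *
  omega

lemma smono_gap_aux {k : ℕ} {f : Fin k → ℕ} (hf : StrictMono f) :
    ∀ d : ℕ, ∀ i j : Fin k, i.val + d = j.val → f i + d ≤ f j := by
  intro d
  induction d with
  | zero =>
    intro i j hij
    have : i = j := Fin.ext (by omega)
    simp [this]
  | succ d ih =>
    intro i j hij
    have hj' : i.val + d < k := by have := j.2; omega
    have h1 := ih i ⟨i.val + d, hj'⟩ rfl
    have h2 : (⟨i.val + d, hj'⟩ : Fin k) < j := by simp [Fin.lt_def]; omega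
    have := hf h2
    omega

lemma smono_gap {k : ℕ} {f : Fin k → ℕ} (hf : StrictMono f) {i j : Fin k} (h : i ≤ j) :
    f i + (j.val - i.val) ≤ f j :=
  smono_gap_aux hf (j.val - i.val) i j (by have := Fin.le_def.mp h; omega)

lemma santi_gap_aux {k : ℕ} {f : Fin k → ℕ} (hf : StrictAnti f) :
    ∀ d : ℕ, ∀ i j : Fin k, i.val + d = j.val → f j + d ≤ f i := by
  intro d
  induction d with
  | zero =>
    intro i j hij
    have : i = j := Fin.ext (by omega)
    simp [this]
  | succ d ih =>
    intro i j hij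
    have hj' : i.val + d < k := by have := j.2; omega
    have h1 := ih i ⟨i.val + d, hj'⟩ rfl
    have h2 : (⟨i.val + d, hj'⟩ : Fin k) < j := by simp [Fin.lt_def]; omega
    have := hf h2
    omega

lemma santi_gap {k : ℕ} {f : Fin k → ℕ} (hf : StrictAnti f) {i j : Fin k} (h : i ≤ j) :
    f j + (j.val - i.val) ≤ f i :=
  santi_gap_aux hf (j.val - i.val) i j (by have := Fin.le_def.mp h; omega)

/-! ### The middle type of pairs of sequences -/

def Mk (a b k : ℕ) : Type :=
  {XY : (Fin k → ℕ) × (Fin k → ℕ) //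
    StrictMono XY.1 ∧ StrictAnti XY.2 ∧
    (∀ i, 1 ≤ XY.1 i ∧ XY.1 i ≤ a) ∧ (∀ i, 1 ≤ XY.2 i ∧ XY.2 i ≤ b)}

namespace Mk

variable {a b k : ℕ}

def X (m : Mk a b k) : Fin k → ℕ := m.val.1
def Y (m : Mk a b k) : Fin k → ℕ := m.val.2
lemma hX (m : Mk a b k) : StrictMono m.X := m.prop.1
lemma hY (m : Mk a b k) : StrictAnti m.Y := m.prop.2.1
lemma X_pos (m : Mk a b k) (i : Fin k) : 1 ≤ m.X i := (m.prop.2.2.1 i).1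
lemma X_le (m : Mk a b k) (i : Fin k) : m.X i ≤ a := (m.prop.2.2.1 i).2
lemma Y_pos (m : Mk a b k) (i : Fin k) : 1 ≤ m.Y i := (m.prop.2.2.2 i).1
lemma Y_le (m : Mk a b k) (i : Fin k) : m.Y i ≤ b := (m.prop.2.2.2 i).2

lemma ext' {m m' : Mk a b k} (hx : m.X = m'.X) (hy : m.Y = m'.Y) : m = m' := by
  apply Subtype.ext; exact Prod.ext hx hy

instance : LE (Mk a b k) :=
  ⟨fun m m' => (∀ i, m.X i ≤ m'.X i) ∧ (∀ i, m.Y i ≤ m'.Y i)⟩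

lemma le_def {m m' : Mk a b k} :
    m ≤ m' ↔ (∀ i, m.X i ≤ m'.X i) ∧ (∀ i, m.Y i ≤ m'.Y i) := Iff.rfl

-- derived bounds
lemma Y_add_ge (m : Mk a b k) (i : Fin k) : k ≤ m.Y i + i.val := by
  have hk : 0 < k := by have := i.2; omega
  set z : Fin k := ⟨k - 1, by omega⟩ with hzdef
  have h := santi_gap m.hY (i := i) (j := z) (by simp only [Fin.le_def]; have := i.2; have : z.val = k - 1 := rfl; omega)
  have h1 := m.Y_pos z
  have h2 := i.2
  have h4 : z.val = k - 1 := rfl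
  rw [h4] at h
  omega

lemma Y_add_le (m : Mk a b k) (i : Fin k) : m.Y i + i.val ≤ b := by
  have hk : 0 < k := by have := i.2; omega
  set z : Fin k := ⟨0, hk⟩ with hzdef
  have h := santi_gap m.hY (i := z) (j := i) (by simp only [Fin.le_def]; have : z.val = 0 := rfl; omega)
  have h1 := m.Y_le z
  have h4 : z.val = 0 := rfl
  rw [h4] at h
  omega

lemma X_rev_add_ge (m : Mk a b k) (i : Fin k) : k ≤ m.X (rev i) + i.val := by
  have hk : 0 < k := by have := i.2; omega
  set z : Fin k := ⟨0, hk⟩ with hzdef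
  have h := smono_gap m.hX (i := z) (j := rev i) (by simp only [Fin.le_def]; have : z.val = 0 := rfl; omega)
  have h1 := m.X_pos z
  have h2 := i.2
  have h3 : (rev i).val = k - 1 - i.val := rfl
  have h4 : z.val = 0 := rfl
  rw [h3, h4] at h
  omega

lemma X_rev_add_le (m : Mk a b k) (i : Fin k) : m.X (rev i) + i.val ≤ a := by
  have hk : 0 < k := by have := i.2; omega
  set z : Fin k := ⟨k - 1, by omega⟩ with hzdef
  have h := smono_gap m.hX (i := rev i) (j := z) (by simp only [Fin.le_def, rev_val, Fin.val_mk]; have : z.val = k - 1 := rfl; omega)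
  have h1 := m.X_le z
  have h2 := i.2
  have h3 : (rev i).val = k - 1 - i.val := rfl
  have h4 : z.val = k - 1 := rfl
  rw [h3, h4] at h
  omega

end Mk

/-! ### Ferrers side -/

lemma downclosed_eq_Icc (s : Finset ℕ) (h1 : ∀ x ∈ s, 1 ≤ x)
    (h2 : ∀ x ∈ s, ∀ y, 1 ≤ y → y ≤ x → y ∈ s) : s = Finset.Icc 1 s.card := by
  rcases s.eq_empty_or_nonempty with he | hne
  · simp [he]
  · have hmax : s = Finset.Icc 1 (s.max' hne) := by
      apply Finset.ext
      intro x
      simp only [Finset.mem_Icc]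
      constructor
      · intro hx; exact ⟨h1 x hx, Finset.le_max' s x hx⟩
      · intro ⟨hx1, hx2⟩; exact h2 _ (s.max'_mem hne) x hx1 hx2
    have hcard : s.card = s.max' hne := by
      conv_lhs => rw [hmax]
      rw [Nat.card_Icc]; omega
    rw [hcard, ← hmax]

def rlen (D : Finset (ℕ × ℕ)) (i : ℕ) : ℕ := (D.filter (fun p => p.1 = i)).card
def clen (D : Finset (ℕ × ℕ)) (j : ℕ) : ℕ := (D.filter (fun p => p.2 = j)).card

lemma row_char {D : Finset (ℕ × ℕ)} (hF : IsFerrers D) {i : ℕ} (hi : 1 ≤ i) (j : ℕ) :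
    (i, j) ∈ D ↔ 1 ≤ j ∧ j ≤ rlen D i := by
  set s : Finset ℕ := (D.filter (fun p => p.1 = i)).image Prod.snd with hs
  have hcard : s.card = rlen D i := by
    rw [hs, rlen, Finset.card_image_of_injOn]
    intro p hp q hq hpq
    simp only [Finset.mem_coe, Finset.mem_filter] at hp hq
    exact Prod.ext (hp.2.trans hq.2.symm) hpq
  have hmem : ∀ j', j' ∈ s ↔ (i, j') ∈ D := by
    intro j'
    simp only [hs, Finset.mem_image, Finset.mem_filter]
    constructor
    · rintro ⟨p, ⟨hp, hp1⟩, hp2⟩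
      have : p = (i, j') := Prod.ext hp1 hp2
      rwa [this] at hp
    · intro h; exact ⟨(i, j'), ⟨h, rfl⟩, rfl⟩
  have hicc : s = Finset.Icc 1 s.card := by
    apply downclosed_eq_Icc
    · intro x hx
      exact (hF.1 _ ((hmem x).mp hx)).2
    · intro x hx y hy1 hyx
      rw [hmem] at hx ⊢
      exact hF.2 _ hx (i, y) hi hy1 le_rfl hyx
  rw [← hmem, hicc, Finset.mem_Icc, hcard]

lemma col_char {D : Finset (ℕ × ℕ)} (hF : IsFerrers D) {j : ℕ} (hj : 1 ≤ j) (i : ℕ) :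
    (i, j) ∈ D ↔ 1 ≤ i ∧ i ≤ clen D j := by
  set s : Finset ℕ := (D.filter (fun p => p.2 = j)).image Prod.fst with hs
  have hcard : s.card = clen D j := by
    rw [hs, clen, Finset.card_image_of_injOn]
    intro p hp q hq hpq
    simp only [Finset.mem_coe, Finset.mem_filter] at hp hq
    exact Prod.ext hpq (hp.2.trans hq.2.symm)
  have hmem : ∀ i', i' ∈ s ↔ (i', j) ∈ D := by
    intro i'
    simp only [hs, Finset.mem_image, Finset.mem_filter]
    constructor
    · rintro ⟨p, ⟨hp, hp1⟩, hp2⟩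
      have : p = (i', j) := Prod.ext hp2 hp1
      rwa [this] at hp
    · intro h; exact ⟨(i', j), ⟨h, rfl⟩, rfl⟩
  have hicc : s = Finset.Icc 1 s.card := by
    apply downclosed_eq_Icc
    · intro x hx
      exact (hF.1 _ ((hmem x).mp hx)).1
    · intro x hx y hy1 hyx
      rw [hmem] at hx ⊢
      exact hF.2 _ hx (y, j) hy1 hj hyx le_rfl
  rw [← hmem, hicc, Finset.mem_Icc, hcard]

lemma rlen_anti {D : Finset (ℕ × ℕ)} (hF : IsFerrers D) {i i' : ℕ} (hi : 1 ≤ i) (h : i ≤ i') :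
    rlen D i' ≤ rlen D i := by
  rcases Nat.eq_zero_or_pos (rlen D i') with h0 | h0
  · omega
  · have hi' : 1 ≤ i' := le_trans hi h
    have : (i', rlen D i') ∈ D := (row_char hF hi' _).mpr ⟨h0, le_rfl⟩
    have : (i, rlen D i') ∈ D := hF.2 _ this _ hi h0 h le_rfl
    exact ((row_char hF hi _).mp this).2

lemma clen_anti {D : Finset (ℕ × ℕ)} (hF : IsFerrers D) {j j' : ℕ} (hj : 1 ≤ j) (h : j ≤ j') :
    clen D j' ≤ clen D j := by
  rcases Nat.eq_zero_or_pos (clen D j') with h0 | h0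
  · omega
  · have hj' : 1 ≤ j' := le_trans hj h
    have : (clen D j', j') ∈ D := (col_char hF hj' _).mpr ⟨h0, le_rfl⟩
    have : (clen D j', j) ∈ D := hF.2 _ this _ h0 hj le_rfl h
    exact ((col_char hF hj _).mp this).2

section DkPfacts

variable {a b k : ℕ} (D : DkP a b k)

lemma durfee_in : ∀ i j : ℕ, 1 ≤ i → i ≤ k → 1 ≤ j → j ≤ k → (i, j) ∈ D.val := by
  have hbdd : BddAbove {m : ℕ | ∀ i j : ℕ, 1 ≤ i → i ≤ m → 1 ≤ j → j ≤ m → (i, j) ∈ D.val} := by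
    refine ⟨a, fun m hm => ?_⟩
    rcases Nat.eq_zero_or_pos m with h0 | h0
    · have := D.prop.2.2
      rcases Finset.eq_empty_or_nonempty D.val with he | ⟨p, hp⟩
      · omega
      · have := (D.prop.2.2 p hp).1
        have := (D.prop.1.1 p hp).1
        omega
    · exact le_trans (D.prop.2.2 _ (hm m m h0 le_rfl h0 le_rfl)).1 le_rfl
  have hne : {m : ℕ | ∀ i j : ℕ, 1 ≤ i → i ≤ m → 1 ≤ j → j ≤ m → (i, j) ∈ D.val}.Nonempty :=
    ⟨0, fun i j h1 h2 _ _ => by omega⟩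
  have hmem := Nat.sSup_mem hne hbdd
  have h2 : durfee D.val = k := D.prop.2.1
  rw [durfee] at h2
  rw [h2] at hmem
  exact hmem

lemma not_durfee_succ : (k + 1, k + 1) ∉ D.val := by
  intro hmem
  have hbdd : BddAbove {m : ℕ | ∀ i j : ℕ, 1 ≤ i → i ≤ m → 1 ≤ j → j ≤ m → (i, j) ∈ D.val} := by
    refine ⟨a, fun m hm => ?_⟩
    rcases Nat.eq_zero_or_pos m with h0 | h0
    · omega
    · exact (D.prop.2.2 _ (hm m m h0 le_rfl h0 le_rfl)).1
  have hmemS : (k + 1) ∈ {m : ℕ | ∀ i j : ℕ, 1 ≤ i → i ≤ m → 1 ≤ j → j ≤ m → (i, j) ∈ D.val} := by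
    intro i j h1 h2 h3 h4
    exact D.prop.1.2 _ hmem (i, j) h1 h3 h2 h4
  have hle := le_csSup hbdd hmemS
  have h2 : durfee D.val = k := D.prop.2.1
  rw [durfee] at h2
  rw [h2] at hle
  omega

end DkPfacts

/-! ### Encoding a sequence pair as a diagram -/

section Enc

variable {a b k : ℕ}

lemma Mk.k_le_a (m : Mk a b k) (t : Fin k) : k ≤ a := by
  have h0 : (0 : ℕ) < k := by have := t.2; omega
  have h := m.X_rev_add_ge ⟨0, h0⟩
  have h' := m.X_le (rev ⟨0, h0⟩)
  have hz : ((⟨0, h0⟩ : Fin k)).val = 0 := rfl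
  omega

lemma Mk.k_le_b (m : Mk a b k) (t : Fin k) : k ≤ b := by
  have h0 : (0 : ℕ) < k := by have := t.2; omega
  have h := m.Y_add_ge ⟨0, h0⟩
  have h' := m.Y_le ⟨0, h0⟩
  have hz : ((⟨0, h0⟩ : Fin k)).val = 0 := rfl
  omega

def mkD (m : Mk a b k) : Finset (ℕ × ℕ) :=
  (Finset.Icc 1 a ×ˢ Finset.Icc 1 b).filter fun p =>
    (∃ t : Fin k, p.1 = t.val + 1 ∧ p.2 ≤ m.Y t + t.val) ∨
    (∃ t : Fin k, p.2 = t.val + 1 ∧ p.1 ≤ m.X (rev t) + t.val)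

lemma mem_mkD (m : Mk a b k) (i j : ℕ) :
    (i, j) ∈ mkD m ↔ 1 ≤ i ∧ 1 ≤ j ∧
      ((∃ t : Fin k, i = t.val + 1 ∧ j ≤ m.Y t + t.val) ∨
       (∃ t : Fin k, j = t.val + 1 ∧ i ≤ m.X (rev t) + t.val)) := by
  simp only [mkD, Finset.mem_filter, Finset.mem_product, Finset.mem_Icc]
  constructor
  · rintro ⟨⟨⟨hi1, hia⟩, hj1, hjb⟩, hcl⟩
    exact ⟨hi1, hj1, hcl⟩
  · rintro ⟨hi1, hj1, hcl⟩
    have hbnd : i ≤ a ∧ j ≤ b := by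
      rcases hcl with ⟨t, ht, hle⟩ | ⟨t, ht, hle⟩
      · have h1 := m.Y_add_le t
        have h2 := m.k_le_a t
        have h3 := t.2
        omega
      · have h1 := m.X_rev_add_le t
        have h2 := m.k_le_b t
        have h3 := t.2
        omega
    exact ⟨⟨⟨hi1, hbnd.1⟩, hj1, hbnd.2⟩, hcl⟩

lemma mkD_ferrers (m : Mk a b k) : IsFerrers (mkD m) := by
  constructor
  · rintro ⟨i, j⟩ hp
    have := (mem_mkD m i j).mp hp
    exact ⟨this.1, this.2.1⟩
  · rintro ⟨i, j⟩ hp ⟨i', j'⟩ hi' hj' hii hjj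
    rw [mem_mkD] at hp ⊢
    refine ⟨hi', hj', ?_⟩
    rcases hp.2.2 with ⟨t, ht, hle⟩ | ⟨t, ht, hle⟩
    · left
      have ht2 := t.2
      refine ⟨⟨i' - 1, by omega⟩, by simp; omega, ?_⟩
      have hgap := santi_gap m.hY (i := (⟨i' - 1, by omega⟩ : Fin k)) (j := t)
        (by simp [Fin.le_def]; omega)
      simp only [Fin.val_mk] at hgap ⊢
      omega
    · right
      have ht2 := t.2
      refine ⟨⟨j' - 1, by omega⟩, by simp; omega, ?_⟩
      have hgap := smono_gap m.hX (i := rev t) (j := rev ⟨j' - 1, by omega⟩)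
        (by simp only [Fin.le_def, rev_val]; omega)
      simp only [rev_val, Fin.val_mk] at hgap ⊢
      omega

lemma mkD_box (m : Mk a b k) : ∀ p ∈ mkD m, p.1 ≤ a ∧ p.2 ≤ b := by
  rintro ⟨i, j⟩ hp
  simp only [mkD, Finset.mem_filter, Finset.mem_product, Finset.mem_Icc] at hp
  exact ⟨hp.1.1.2, hp.1.2.2⟩

lemma mkD_durfee (m : Mk a b k) : durfee (mkD m) = k := by
  have hS : {m' : ℕ | ∀ i j : ℕ, 1 ≤ i → i ≤ m' → 1 ≤ j → j ≤ m' → (i, j) ∈ mkD m}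
      = Set.Iic k := by
    ext m'
    simp only [Set.mem_setOf_eq, Set.mem_Iic]
    constructor
    · intro hm'
      by_contra hgt
      push_neg at hgt
      have hmem := hm' (k + 1) (k + 1) (by omega) (by omega) (by omega) (by omega)
      rw [mem_mkD] at hmem
      rcases hmem.2.2 with ⟨t, ht, _⟩ | ⟨t, ht, _⟩ <;> · have := t.2; omega
    · intro hm' i j hi1 him hj1 hjm
      rw [mem_mkD]
      refine ⟨hi1, hj1, Or.inl ⟨⟨i - 1, by omega⟩, by simp; omega, ?_⟩⟩
      have := m.Y_add_ge ⟨i - 1, by omega⟩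
      simp only [Fin.val_mk] at this ⊢
      omega
  rw [durfee, hS, csSup_Iic]

def encD (m : Mk a b k) : DkP a b k :=
  ⟨mkD m, mkD_ferrers m, mkD_durfee m, mkD_box m⟩

end Enc

/-! ### Decoding a diagram -/

section Dec

variable {a b k : ℕ}

lemma rlen_ge (D : DkP a b k) (t : Fin k) : k ≤ rlen D.val (t.val + 1) := by
  have ht := t.2
  have hmem : (t.val + 1, k) ∈ D.val := durfee_in D _ _ (by omega) (by omega) (by omega) le_rfl
  exact ((row_char D.prop.1 (by omega) k).mp hmem).2

lemma rlen_le_b (D : DkP a b k) (t : Fin k) : rlen D.val (t.val + 1) ≤ b := by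
  have h1 := rlen_ge D t
  have ht := t.2
  have hmem : (t.val + 1, rlen D.val (t.val + 1)) ∈ D.val :=
    (row_char D.prop.1 (by omega) _).mpr ⟨by omega, le_rfl⟩
  exact (D.prop.2.2 _ hmem).2

lemma clen_ge (D : DkP a b k) (t : Fin k) : k ≤ clen D.val (t.val + 1) := by
  have ht := t.2
  have hmem : (k, t.val + 1) ∈ D.val := durfee_in D _ _ (by omega) le_rfl (by omega) (by omega)
  exact ((col_char D.prop.1 (by omega) k).mp hmem).2

lemma clen_le_a (D : DkP a b k) (t : Fin k) : clen D.val (t.val + 1) ≤ a := by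
  have h1 := clen_ge D t
  have ht := t.2
  have hmem : (clen D.val (t.val + 1), t.val + 1) ∈ D.val :=
    (col_char D.prop.1 (by omega) _).mpr ⟨by omega, le_rfl⟩
  exact (D.prop.2.2 _ hmem).1

def decM (D : DkP a b k) : Mk a b k :=
  ⟨(fun i => clen D.val (k - i.val) - (k - 1 - i.val),
    fun i => rlen D.val (i.val + 1) - i.val),
   by
    intro i j hij
    have hi := i.2; have hj := j.2
    have hij' : i.val < j.val := hij
    have h1 : clen D.val (k - i.val) ≤ clen D.val (k - j.val) :=
      clen_anti D.prop.1 (by omega) (by omega)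
    have h2 : k ≤ clen D.val (k - i.val) := by
      have e1 : k - i.val = (rev i).val + 1 := by simp only [rev_val]; omega
      rw [e1]; exact clen_ge D (rev i)
    dsimp only
    omega,
   by
    intro i j hij
    have hi := i.2; have hj := j.2
    have hij' : i.val < j.val := hij
    have h1 : rlen D.val (j.val + 1) ≤ rlen D.val (i.val + 1) :=
      rlen_anti D.prop.1 (by omega) (by omega)
    have h2 : k ≤ rlen D.val (j.val + 1) := rlen_ge D j
    dsimp only
    omega,
   by
    intro i
    have hi := i.2
    have e1 : k - i.val = (rev i).val + 1 := by simp only [rev_val]; omega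
    have h2 : k ≤ clen D.val (k - i.val) := by rw [e1]; exact clen_ge D (rev i)
    have h3 : clen D.val (k - i.val) ≤ a := by rw [e1]; exact clen_le_a D (rev i)
    dsimp only
    constructor <;> omega,
   by
    intro i
    have hi := i.2
    have h2 : k ≤ rlen D.val (i.val + 1) := rlen_ge D i
    have h3 : rlen D.val (i.val + 1) ≤ b := rlen_le_b D i
    dsimp only
    constructor <;> omega⟩

@[simp] lemma decM_X (D : DkP a b k) (i : Fin k) :
    (decM D).X i = clen D.val (k - i.val) - (k - 1 - i.val) := rfl

@[simp] lemma decM_Y (D : DkP a b k) (i : Fin k) :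
    (decM D).Y i = rlen D.val (i.val + 1) - i.val := rfl

/-! ### Roundtrips -/

lemma rlen_mkD (m : Mk a b k) (t : Fin k) :
    rlen (mkD m) (t.val + 1) = m.Y t + t.val := by
  have hchar := row_char (mkD_ferrers m) (show 1 ≤ t.val + 1 by omega)
  have hmem : ∀ j, (t.val + 1, j) ∈ mkD m ↔ 1 ≤ j ∧ j ≤ m.Y t + t.val := by
    intro j
    rw [mem_mkD]
    constructor
    · rintro ⟨hi1, hj1, hcl⟩
      refine ⟨hj1, ?_⟩
      rcases hcl with ⟨s, hs, hle⟩ | ⟨s, hs, hle⟩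
      · have hst : s = t := Fin.ext (by omega)
        subst hst
        exact hle
      · have h1 := m.Y_add_ge t
        have h2 := s.2
        omega
    · intro ⟨hj1, hle⟩
      exact ⟨by omega, hj1, Or.inl ⟨t, rfl, hle⟩⟩
  have hpos := m.Y_pos t
  have h1 := ((hchar (m.Y t + t.val)).mp ((hmem _).mpr ⟨by omega, le_rfl⟩)).2
  have h2 := ((hmem (rlen (mkD m) (t.val + 1))).mp
    ((hchar _).mpr ⟨by omega, le_rfl⟩)).2
  omega

lemma clen_mkD (m : Mk a b k) (s : Fin k) :
    clen (mkD m) (s.val + 1) = m.X (rev s) + s.val := by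
  have hchar := col_char (mkD_ferrers m) (show 1 ≤ s.val + 1 by omega)
  have hmem : ∀ i, (i, s.val + 1) ∈ mkD m ↔ 1 ≤ i ∧ i ≤ m.X (rev s) + s.val := by
    intro i
    rw [mem_mkD]
    constructor
    · rintro ⟨hi1, hj1, hcl⟩
      refine ⟨hi1, ?_⟩
      rcases hcl with ⟨t, ht, hle⟩ | ⟨t, ht, hle⟩
      · have h1 := m.X_rev_add_ge s
        have h2 := t.2
        omega
      · have hst : t = s := Fin.ext (by omega)
        subst hst
        exact hle
    · intro ⟨hi1, hle⟩
      exact ⟨hi1, by omega, Or.inr ⟨s, rfl, hle⟩⟩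
  have hpos := m.X_pos (rev s)
  have h1 := ((hchar (m.X (rev s) + s.val)).mp ((hmem _).mpr ⟨by omega, le_rfl⟩)).2
  have h2 := ((hmem (clen (mkD m) (s.val + 1))).mp
    ((hchar _).mpr ⟨by omega, le_rfl⟩)).2
  omega

lemma decM_encD (m : Mk a b k) : decM (encD m) = m := by
  apply Mk.ext'
  · funext i
    have hi := i.2
    have e1 : k - i.val = (rev i).val + 1 := by simp only [rev_val]; omega
    rw [decM_X]
    show clen (mkD m) (k - i.val) - (k - 1 - i.val) = m.X i
    rw [e1, clen_mkD m (rev i), rev_rev, rev_val]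
    omega
  · funext t
    have ht := t.2
    rw [decM_Y]
    show rlen (mkD m) (t.val + 1) - t.val = m.Y t
    rw [rlen_mkD]
    omega

lemma dX_clen (D : DkP a b k) (t : Fin k) :
    (decM D).X (rev t) + t.val = clen D.val (t.val + 1) := by
  have ht := t.2
  have e1 : k - (rev t).val = t.val + 1 := by simp only [rev_val]; omega
  have e2 : k - 1 - (rev t).val = t.val := by simp only [rev_val]; omega
  rw [decM_X, e1, e2]
  have := clen_ge D t
  omega

lemma dY_rlen (D : DkP a b k) (t : Fin k) :
    (decM D).Y t + t.val = rlen D.val (t.val + 1) := by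
  have ht := t.2
  rw [decM_Y]
  have := rlen_ge D t
  omega

lemma encD_decM (D : DkP a b k) : encD (decM D) = D := by
  apply Subtype.ext
  show mkD (decM D) = D.val
  apply Finset.ext
  rintro ⟨i, j⟩
  rw [mem_mkD]
  constructor
  · rintro ⟨hi1, hj1, hcl⟩
    rcases hcl with ⟨t, ht, hle⟩ | ⟨t, ht, hle⟩
    · rw [dY_rlen D t] at hle
      rw [ht]
      exact (row_char D.prop.1 (by omega) j).mpr ⟨hj1, hle⟩
    · rw [dX_clen D t] at hle
      rw [ht]
      exact (col_char D.prop.1 (by omega) i).mpr ⟨hi1, hle⟩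
  · intro hp
    have hi1 := (D.prop.1.1 _ hp).1
    have hj1 := (D.prop.1.1 _ hp).2
    refine ⟨hi1, hj1, ?_⟩
    by_cases hik : i ≤ k
    · left
      refine ⟨⟨i - 1, by omega⟩, by simp; omega, ?_⟩
      have e : (⟨i - 1, by omega⟩ : Fin k).val + 1 = i := by simp; omega
      rw [dY_rlen D ⟨i - 1, by omega⟩, e]
      exact ((row_char D.prop.1 (by omega) j).mp hp).2
    · have hjk : j ≤ k := by
        by_contra hjk
        exact not_durfee_succ D (D.prop.1.2 _ hp (k + 1, k + 1) (by omega) (by omega)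
          (by omega) (by omega))
      right
      refine ⟨⟨j - 1, by omega⟩, by simp; omega, ?_⟩
      have e : (⟨j - 1, by omega⟩ : Fin k).val + 1 = j := by simp; omega
      rw [dX_clen D ⟨j - 1, by omega⟩, e]
      exact ((col_char D.prop.1 (by omega) i).mp hp).2

lemma mkD_subset_iff (m m' : Mk a b k) : mkD m ⊆ mkD m' ↔ m ≤ m' := by
  constructor
  · intro h
    rw [Mk.le_def]
    constructor
    · intro i
      have hkey : ∀ s : Fin k, m.X (rev s) ≤ m'.X (rev s) := by
        intro s
        have hpos := m.X_pos (rev s)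
        have hp : (m.X (rev s) + s.val, s.val + 1) ∈ mkD m :=
          (mem_mkD m _ _).mpr ⟨by omega, by omega, Or.inr ⟨s, rfl, le_rfl⟩⟩
        have hp' := (mem_mkD m' _ _).mp (h hp)
        rcases hp'.2.2 with ⟨t, ht, hle⟩ | ⟨s', hs', hle⟩
        · have h1 := m'.X_rev_add_ge s
          have h2 := t.2
          omega
        · have hss : s' = s := Fin.ext (by omega)
          subst hss
          omega
      have := hkey (rev i)
      rwa [rev_rev] at this
    · intro t
      have hpos := m.Y_pos t
      have hp : (t.val + 1, m.Y t + t.val) ∈ mkD m :=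
        (mem_mkD m _ _).mpr ⟨by omega, by omega, Or.inl ⟨t, rfl, le_rfl⟩⟩
      have hp' := (mem_mkD m' _ _).mp (h hp)
      rcases hp'.2.2 with ⟨t', ht', hle⟩ | ⟨s, hs, hle⟩
      · have htt : t' = t := Fin.ext (by omega)
        subst htt
        omega
      · have h1 := m'.Y_add_ge t
        have h2 := s.2
        omega
  · intro hle
    rintro ⟨i, j⟩ hp
    rw [mem_mkD] at hp ⊢
    refine ⟨hp.1, hp.2.1, ?_⟩
    rcases hp.2.2 with ⟨t, ht, h⟩ | ⟨t, ht, h⟩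
    · exact Or.inl ⟨t, ht, le_trans h (by have := hle.2 t; omega)⟩
    · exact Or.inr ⟨t, ht, le_trans h (by have := hle.1 (rev t); omega)⟩

noncomputable def e2 : Mk a b k ≃o DkP a b k where
  toFun := encD
  invFun := decM
  left_inv := decM_encD
  right_inv := encD_decM
  map_rel_iff' := by
    intro m m'
    show encD m ≤ encD m' ↔ m ≤ m'
    rw [← mkD_subset_iff]
    exact Iff.rfl

end Dec

/-! ### Antichain side -/

section Anti

variable {a b k : ℕ}

lemma x_inj (A : AkSet (Box a b) k) :
    Set.InjOn (fun p : Box a b => p.val.1) ↑A.carrier := by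
  intro p hp q hq hpq
  by_contra hne
  have h1 := A.prop.1 hp hq hne
  have h2 := A.prop.1 hq hp (Ne.symm hne)
  rcases le_total p.val.2 q.val.2 with h | h
  · exact h1 (Subtype.coe_le_coe.mp (Prod.mk_le_mk.mpr ⟨le_of_eq hpq, h⟩))
  · exact h2 (Subtype.coe_le_coe.mp (Prod.mk_le_mk.mpr ⟨le_of_eq hpq.symm, h⟩))

lemma y_inj (A : AkSet (Box a b) k) :
    Set.InjOn (fun p : Box a b => p.val.2) ↑A.carrier := by
  intro p hp q hq hpq
  by_contra hne
  have h1 := A.prop.1 hp hq hne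
  have h2 := A.prop.1 hq hp (Ne.symm hne)
  rcases le_total p.val.1 q.val.1 with h | h
  · exact h1 (Subtype.coe_le_coe.mp (Prod.mk_le_mk.mpr ⟨h, le_of_eq hpq⟩))
  · exact h2 (Subtype.coe_le_coe.mp (Prod.mk_le_mk.mpr ⟨h, le_of_eq hpq.symm⟩))

def sx (A : AkSet (Box a b) k) : Finset ℕ := A.carrier.image (fun p => p.val.1)
def sy (A : AkSet (Box a b) k) : Finset ℕ := A.carrier.image (fun p => p.val.2)

lemma mem_sx (A : AkSet (Box a b) k) (x : ℕ) :
    x ∈ sx A ↔ ∃ p ∈ A.carrier, p.val.1 = x := by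
  simp [sx]

lemma mem_sy (A : AkSet (Box a b) k) (x : ℕ) :
    x ∈ sy A ↔ ∃ p ∈ A.carrier, p.val.2 = x := by
  simp [sy]

lemma card_sx (A : AkSet (Box a b) k) : (sx A).card = k := by
  rw [sx, Finset.card_image_of_injOn (x_inj A)]; exact A.prop.2

lemma card_sy (A : AkSet (Box a b) k) : (sy A).card = k := by
  rw [sy, Finset.card_image_of_injOn (y_inj A)]; exact A.prop.2

noncomputable def aX (A : AkSet (Box a b) k) : Fin k → ℕ := (sx A).orderEmbOfFin (card_sx A)
noncomputable def aY (A : AkSet (Box a b) k) : Fin k → ℕ :=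
  fun i => (sy A).orderEmbOfFin (card_sy A) (rev i)

lemma elem_spec (A : AkSet (Box a b) k) :
    ∃ e : Fin k → Box a b, (∀ i, e i ∈ A.carrier) ∧
      (∀ i, (e i).val = (aX A i, aY A i)) ∧ A.carrier = Finset.univ.image e := by
  have hx : ∀ i : Fin k, ∃ p, p ∈ A.carrier ∧ p.val.1 = aX A i := by
    intro i
    have := Finset.orderEmbOfFin_mem (sx A) (card_sx A) i
    rw [mem_sx] at this
    obtain ⟨p, hp, hpx⟩ := this
    exact ⟨p, hp, hpx⟩
  choose e he1 he2 using hx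
  have hanti : StrictAnti (fun i => (e i).val.2) := by
    intro i j hij
    have hxlt : (e i).val.1 < (e j).val.1 := by
      rw [he2, he2]
      exact ((sx A).orderEmbOfFin (card_sx A)).strictMono hij
    have hne : e i ≠ e j := fun h => by rw [h] at hxlt; omega
    have h1 := A.prop.1 (he1 i) (he1 j) hne
    by_contra hge
    push_neg at hge
    exact h1 (Subtype.coe_le_coe.mp (Prod.mk_le_mk.mpr ⟨le_of_lt hxlt, hge⟩))
  have hinj : Function.Injective e := by
    intro i j hij
    have := congrArg (fun p : Box a b => p.val.1) hij
    rw [he2 i, he2 j] at this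
    exact ((sx A).orderEmbOfFin (card_sx A)).injective this
  have hyeq : ∀ i, (e i).val.2 = aY A i := by
    have hmono : StrictMono (fun t => (e (rev t)).val.2) := by
      intro i j hij
      exact hanti (rev_lt_rev hij)
    have hmem : ∀ t, (fun t => (e (rev t)).val.2) t ∈ sy A := by
      intro t
      rw [mem_sy]
      exact ⟨e (rev t), he1 _, rfl⟩
    have := Finset.orderEmbOfFin_unique (card_sy A) hmem hmono
    intro i
    have h2 := congrFun this (rev i)
    simp only [rev_rev] at h2
    rw [aY, h2]
  refine ⟨e, he1, fun i => Prod.ext (he2 i) (hyeq i), ?_⟩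
  have hsub : Finset.univ.image e ⊆ A.carrier := by
    intro p hp
    obtain ⟨i, _, rfl⟩ := Finset.mem_image.mp hp
    exact he1 i
  have hcard : A.carrier.card ≤ (Finset.univ.image e).card := by
    rw [Finset.card_image_of_injective _ hinj, Finset.card_univ, Fintype.card_fin]
    exact le_of_eq A.prop.2
  exact (Finset.eq_of_subset_of_card_le hsub hcard).symm

lemma aX_mem_bounds (A : AkSet (Box a b) k) (i : Fin k) : 1 ≤ aX A i ∧ aX A i ≤ a := by
  have := Finset.orderEmbOfFin_mem (sx A) (card_sx A) i
  rw [mem_sx] at this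
  obtain ⟨p, hp, hpx⟩ := this
  rw [aX, ← hpx]
  exact p.prop.1

lemma aY_mem_bounds (A : AkSet (Box a b) k) (i : Fin k) : 1 ≤ aY A i ∧ aY A i ≤ b := by
  have := Finset.orderEmbOfFin_mem (sy A) (card_sy A) (rev i)
  rw [mem_sy] at this
  obtain ⟨p, hp, hpy⟩ := this
  rw [aY, ← hpy]
  exact p.prop.2

noncomputable def encM (A : AkSet (Box a b) k) : Mk a b k :=
  ⟨(aX A, aY A),
   ((sx A).orderEmbOfFin (card_sx A)).strictMono,
   fun i j hij => ((sy A).orderEmbOfFin (card_sy A)).strictMono (rev_lt_rev hij),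
   aX_mem_bounds A, aY_mem_bounds A⟩

@[simp] lemma encM_X (A : AkSet (Box a b) k) : (encM A).X = aX A := rfl
@[simp] lemma encM_Y (A : AkSet (Box a b) k) : (encM A).Y = aY A := rfl

def boxEl (m : Mk a b k) (i : Fin k) : Box a b :=
  ⟨(m.X i, m.Y i), ⟨m.X_pos i, m.X_le i⟩, m.Y_pos i, m.Y_le i⟩

lemma boxEl_inj (m : Mk a b k) : Function.Injective (boxEl m) := by
  intro i j hij
  have := congrArg (fun p : Box a b => p.val.1) hij
  simp only [boxEl] at this
  exact m.hX.injective this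

def decA (m : Mk a b k) : AkSet (Box a b) k := by
  refine ⟨Finset.univ.image (boxEl m), ?_, ?_⟩
  · intro p hp q hq hne hle
    simp only [Finset.coe_image, Set.mem_image, Finset.mem_coe] at hp hq
    obtain ⟨i, _, rfl⟩ := hp
    obtain ⟨j, _, rfl⟩ := hq
    have hij : i ≠ j := fun h => hne (by rw [h])
    have hle' : (boxEl m i).val ≤ (boxEl m j).val := Subtype.coe_le_coe.mpr hle
    rw [boxEl, boxEl] at hle'
    obtain ⟨h1, h2⟩ := Prod.mk_le_mk.mp hle'
    rcases lt_or_gt_of_ne hij with h | h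
    · exact absurd h2 (not_le_of_gt (m.hY h))
    · exact absurd h1 (not_le_of_gt (m.hX h))
  · rw [Finset.card_image_of_injective _ (boxEl_inj m), Finset.card_univ, Fintype.card_fin]

lemma decA_carrier (m : Mk a b k) : (decA m).carrier = Finset.univ.image (boxEl m) := rfl

lemma encM_decA (m : Mk a b k) : encM (decA m) = m := by
  apply Mk.ext'
  · rw [encM_X]
    symm
    apply Finset.orderEmbOfFin_unique (card_sx (decA m)) _ m.hX
    intro i
    rw [mem_sx]
    exact ⟨boxEl m i, Finset.mem_image.mpr ⟨i, Finset.mem_univ i, rfl⟩, rfl⟩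
  · rw [encM_Y]
    have hmono : StrictMono (fun t => m.Y (rev t)) := fun i j hij => m.hY (rev_lt_rev hij)
    have hmem : ∀ t, (fun t => m.Y (rev t)) t ∈ sy (decA m) := by
      intro t
      rw [mem_sy]
      exact ⟨boxEl m (rev t), Finset.mem_image.mpr ⟨rev t, Finset.mem_univ _, rfl⟩, rfl⟩
    have h := Finset.orderEmbOfFin_unique (card_sy (decA m)) hmem hmono
    funext i
    have h2 := congrFun h (rev i)
    simp only [rev_rev] at h2
    rw [aY, ← h2]

lemma decA_encM (A : AkSet (Box a b) k) : decA (encM A) = A := by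
  obtain ⟨e, he1, he2, he3⟩ := elem_spec A
  apply Subtype.ext
  show Finset.univ.image (boxEl (encM A)) = A.val
  have : A.val = A.carrier := rfl
  rw [this, he3]
  apply Finset.image_congr
  intro i _
  apply Subtype.ext
  rw [he2 i]
  rfl

/-! ### Domination of sorted sequences -/

lemma count_dom {k : ℕ} (s t : Finset ℕ) (hs : s.card = k) (ht : t.card = k)
    (h : ∀ m, (t.filter (· ≤ m)).card ≤ (s.filter (· ≤ m)).card) (i : Fin k) :
    s.orderEmbOfFin hs i ≤ t.orderEmbOfFin ht i := by
  set m := t.orderEmbOfFin ht i with hm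
  have h1 : i.val + 1 ≤ (t.filter (· ≤ m)).card := by
    have hsub : (Finset.Iic i).image (t.orderEmbOfFin ht) ⊆ t.filter (· ≤ m) := by
      intro x hx
      obtain ⟨j, hj, rfl⟩ := Finset.mem_image.mp hx
      rw [Finset.mem_Iic] at hj
      exact Finset.mem_filter.mpr ⟨Finset.orderEmbOfFin_mem t ht j,
        (t.orderEmbOfFin ht).monotone hj⟩
    calc i.val + 1 = (Finset.Iic i).card := by simp
      _ = ((Finset.Iic i).image (t.orderEmbOfFin ht)).card :=
          (Finset.card_image_of_injective _ (t.orderEmbOfFin ht).injective).symm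
      _ ≤ _ := Finset.card_le_card hsub
  have h2 : i.val + 1 ≤ (s.filter (· ≤ m)).card := le_trans h1 (h m)
  by_contra hlt
  push_neg at hlt
  have hsub2 : s.filter (· ≤ m) ⊆ (Finset.Iio i).image (s.orderEmbOfFin hs) := by
    intro x hx
    obtain ⟨hxs, hxm⟩ := Finset.mem_filter.mp hx
    have : x ∈ Set.range (s.orderEmbOfFin hs) := by
      rw [Finset.range_orderEmbOfFin]; exact hxs
    obtain ⟨j, rfl⟩ := this
    refine Finset.mem_image.mpr ⟨j, Finset.mem_Iio.mpr ?_, rfl⟩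
    by_contra hji
    push_neg at hji
    have := (s.orderEmbOfFin hs).monotone hji
    omega
  have h3 : (s.filter (· ≤ m)).card ≤ i.val := by
    calc (s.filter (· ≤ m)).card ≤ ((Finset.Iio i).image (s.orderEmbOfFin hs)).card :=
          Finset.card_le_card hsub2
      _ ≤ (Finset.Iio i).card := Finset.card_image_le
      _ = i.val := by simp
  omega

lemma dom_of_swap {k : ℕ} (s t : Finset ℕ) (hs : s.card = k) (ht : t.card = k)
    (u v : ℕ) (hu : u ∈ s) (hv : v ∈ t) (huv : u ≤ v) (hst : s.erase u = t.erase v)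
    (i : Fin k) : s.orderEmbOfFin hs i ≤ t.orderEmbOfFin ht i := by
  apply count_dom s t hs ht _ i
  intro m
  have hs' : s = insert u (s.erase u) := (Finset.insert_erase hu).symm
  have ht' : t = insert v (t.erase v) := (Finset.insert_erase hv).symm
  have hvE : v ∉ s.erase u := by rw [hst]; exact Finset.notMem_erase v t
  have huE : u ∉ s.erase u := Finset.notMem_erase u s
  conv_lhs => rw [ht', ← hst]
  conv_rhs => rw [hs']
  rw [Finset.filter_insert, Finset.filter_insert]
  by_cases h1 : v ≤ m
  · have h2 : u ≤ m := le_trans huv h1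
    rw [if_pos h1, if_pos h2]
    rw [Finset.card_insert_of_notMem (fun hc => hvE (Finset.mem_filter.mp hc).1),
        Finset.card_insert_of_notMem (fun hc => huE (Finset.mem_filter.mp hc).1)]
  · rw [if_neg h1]
    by_cases h2 : u ≤ m
    · rw [if_pos h2]
      exact Finset.card_le_card (Finset.subset_insert _ _)
    · rw [if_neg h2]

/-! ### PrecK implies pointwise domination -/

lemma sx_erase (A : AkSet (Box a b) k) (p : Box a b) (hp : p ∈ A.carrier) :
    (sx A).erase p.val.1 = (A.carrier.erase p).image (fun r => r.val.1) := by
  ext x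
  rw [Finset.mem_erase, mem_sx]
  constructor
  · rintro ⟨hne, r, hr, hrx⟩
    refine Finset.mem_image.mpr ⟨r, Finset.mem_erase.mpr ⟨?_, hr⟩, hrx⟩
    intro hrp; rw [hrp] at hrx; exact hne hrx.symm
  · intro hx
    obtain ⟨r, hr, hrx⟩ := Finset.mem_image.mp hx
    obtain ⟨hrp, hrA⟩ := Finset.mem_erase.mp hr
    refine ⟨?_, r, hrA, hrx⟩
    intro hxp
    exact hrp (x_inj A hrA hp (show (r : ℕ × ℕ).1 = (p : ℕ × ℕ).1 by rw [hrx]; exact hxp))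

lemma sy_erase (A : AkSet (Box a b) k) (p : Box a b) (hp : p ∈ A.carrier) :
    (sy A).erase p.val.2 = (A.carrier.erase p).image (fun r => r.val.2) := by
  ext x
  rw [Finset.mem_erase, mem_sy]
  constructor
  · rintro ⟨hne, r, hr, hrx⟩
    refine Finset.mem_image.mpr ⟨r, Finset.mem_erase.mpr ⟨?_, hr⟩, hrx⟩
    intro hrp; rw [hrp] at hrx; exact hne hrx.symm
  · intro hx
    obtain ⟨r, hr, hrx⟩ := Finset.mem_image.mp hx
    obtain ⟨hrp, hrA⟩ := Finset.mem_erase.mp hr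
    refine ⟨?_, r, hrA, hrx⟩
    intro hxp
    exact hrp (y_inj A hrA hp (show (r : ℕ × ℕ).2 = (p : ℕ × ℕ).2 by rw [hrx]; exact hxp))

lemma prec_le {A B : AkSet (Box a b) k} (h : PrecK A B) : encM A ≤ encM B := by
  obtain ⟨p, q, hAB, hBA, hpq⟩ := h
  have hpA : p ∈ A.carrier := by
    have : p ∈ ((A.carrier : Set (Box a b)) \ B.carrier) := by rw [hAB]; rfl
    exact this.1
  have hpB : p ∉ B.carrier := by
    have : p ∈ ((A.carrier : Set (Box a b)) \ B.carrier) := by rw [hAB]; rfl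
    exact fun hc => this.2 hc
  have hqB : q ∈ B.carrier := by
    have : q ∈ ((B.carrier : Set (Box a b)) \ A.carrier) := by rw [hBA]; rfl
    exact this.1
  have hqA : q ∉ A.carrier := by
    have : q ∈ ((B.carrier : Set (Box a b)) \ A.carrier) := by rw [hBA]; rfl
    exact fun hc => this.2 hc
  have hcommon : A.carrier.erase p = B.carrier.erase q := by
    ext r
    rw [Finset.mem_erase, Finset.mem_erase]
    constructor
    · rintro ⟨hrp, hrA⟩
      have hrB : r ∈ B.carrier := by
        by_contra hrB
        have : r ∈ ((A.carrier : Set (Box a b)) \ B.carrier) := ⟨hrA, hrB⟩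
        rw [hAB] at this
        exact hrp this
      refine ⟨fun hrq => ?_, hrB⟩
      rw [hrq] at hrA
      exact hqA hrA
    · rintro ⟨hrq, hrB⟩
      have hrA : r ∈ A.carrier := by
        by_contra hrA
        have : r ∈ ((B.carrier : Set (Box a b)) \ A.carrier) := ⟨hrB, hrA⟩
        rw [hBA] at this
        exact hrq this
      refine ⟨fun hrp => ?_, hrA⟩
      rw [hrp] at hrB
      exact hpB hrB
  have hple : p.val ≤ q.val := Subtype.coe_le_coe.mpr (le_of_lt hpq)
  obtain ⟨hx, hy⟩ := Prod.le_def.mp hple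
  have hxerase : (sx A).erase p.val.1 = (sx B).erase q.val.1 := by
    rw [sx_erase A p hpA, sx_erase B q hqB, hcommon]
  have hyerase : (sy A).erase p.val.2 = (sy B).erase q.val.2 := by
    rw [sy_erase A p hpA, sy_erase B q hqB, hcommon]
  have hpx : p.val.1 ∈ sx A := (mem_sx A _).mpr ⟨p, hpA, rfl⟩
  have hqx : q.val.1 ∈ sx B := (mem_sx B _).mpr ⟨q, hqB, rfl⟩
  have hpy : p.val.2 ∈ sy A := (mem_sy A _).mpr ⟨p, hpA, rfl⟩
  have hqy : q.val.2 ∈ sy B := (mem_sy B _).mpr ⟨q, hqB, rfl⟩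
  rw [Mk.le_def]
  constructor
  · intro i
    exact dom_of_swap (sx A) (sx B) (card_sx A) (card_sx B) _ _ hpx hqx hx hxerase i
  · intro i
    exact dom_of_swap (sy A) (sy B) (card_sy A) (card_sy B) _ _ hpy hqy hy hyerase (rev i)

lemma Mk.le_refl (m : Mk a b k) : m ≤ m := ⟨fun _ => Nat.le_refl _, fun _ => Nat.le_refl _⟩

lemma Mk.le_trans {m1 m2 m3 : Mk a b k} (h1 : m1 ≤ m2) (h2 : m2 ≤ m3) : m1 ≤ m3 :=
  ⟨fun i => Nat.le_trans (h1.1 i) (h2.1 i), fun i => Nat.le_trans (h1.2 i) (h2.2 i)⟩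

lemma leK_imp_le {A B : AkSet (Box a b) k} (h : LeK A B) : encM A ≤ encM B := by
  induction h with
  | refl => exact Mk.le_refl _
  | tail _ h2 ih => exact Mk.le_trans ih (prec_le h2)

/-! ### Stepping: pointwise domination implies LeK -/

lemma prec_of_update (mA mA' : Mk a b k) (t : Fin k)
    (hagree : ∀ i, i ≠ t → mA.X i = mA'.X i ∧ mA.Y i = mA'.Y i)
    (hlex : mA.X t ≤ mA'.X t) (hley : mA.Y t ≤ mA'.Y t)
    (hne : (mA.X t, mA.Y t) ≠ (mA'.X t, mA'.Y t)) :
    PrecK (decA mA) (decA mA') := by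
  have hboxagree : ∀ i, i ≠ t → boxEl mA i = boxEl mA' i := by
    intro i hi
    apply Subtype.ext
    show (mA.X i, mA.Y i) = (mA'.X i, mA'.Y i)
    rw [(hagree i hi).1, (hagree i hi).2]
  have hvalne : (boxEl mA t).val ≠ (boxEl mA' t).val := hne
  refine ⟨boxEl mA t, boxEl mA' t, ?_, ?_, ?_⟩
  · ext r
    simp only [Set.mem_diff, Finset.mem_coe, Set.mem_singleton_iff, decA_carrier,
      Finset.mem_image, Finset.mem_univ, true_and]
    constructor
    · rintro ⟨⟨i, rfl⟩, hr2⟩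
      rcases eq_or_ne i t with rfl | hi
      · rfl
      · exact (hr2 ⟨i, (hboxagree i hi).symm⟩).elim
    · rintro rfl
      refine ⟨⟨t, rfl⟩, ?_⟩
      rintro ⟨j, hj⟩
      rcases eq_or_ne j t with rfl | hj'
      · exact hvalne (congrArg Subtype.val hj.symm)
      · rw [← hboxagree j hj'] at hj
        have h1 : mA.X j = mA.X t := congrArg (fun p : Box a b => p.val.1) hj
        exact hj' (mA.hX.injective h1)
  · ext r
    simp only [Set.mem_diff, Finset.mem_coe, Set.mem_singleton_iff, decA_carrier,
      Finset.mem_image, Finset.mem_univ, true_and]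
    constructor
    · rintro ⟨⟨i, rfl⟩, hr2⟩
      rcases eq_or_ne i t with rfl | hi
      · rfl
      · exact (hr2 ⟨i, hboxagree i hi⟩).elim
    · rintro rfl
      refine ⟨⟨t, rfl⟩, ?_⟩
      rintro ⟨j, hj⟩
      rcases eq_or_ne j t with rfl | hj'
      · exact hvalne (congrArg Subtype.val hj)
      · rw [hboxagree j hj'] at hj
        have h1 : mA'.X j = mA'.X t := congrArg (fun p : Box a b => p.val.1) hj
        exact hj' (mA'.hX.injective h1)
  · apply lt_of_le_of_ne
    · exact Subtype.coe_le_coe.mp (Prod.mk_le_mk.mpr ⟨hlex, hley⟩)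
    · intro h
      exact hne (congrArg Subtype.val h)

lemma sum_lt_update {f : Fin k → ℕ} {t : Fin k} {v : ℕ} (hv : f t < v) :
    ∑ i, f i + 1 ≤ ∑ i, Function.update f t v i := by
  rw [Finset.sum_update_of_mem (Finset.mem_univ t)]
  have h := Finset.add_sum_erase Finset.univ f (Finset.mem_univ t)
  rw [Finset.erase_eq] at h
  omega

lemma step_main : ∀ (N : ℕ) (mA mB : Mk a b k), mA ≤ mB →
    (∑ i, (mB.X i + mB.Y i)) ≤ (∑ i, (mA.X i + mA.Y i)) + N →
    LeK (decA mA) (decA mB) := by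
  intro N
  induction N with
  | zero =>
    intro mA mB hle hsum
    have h1 : ∑ i, (mA.X i + mA.Y i) ≤ ∑ i, (mB.X i + mB.Y i) :=
      Finset.sum_le_sum (fun i _ => by have := hle.1 i; have := hle.2 i; omega)
    have h2 : ∑ i, (mA.X i + mA.Y i) = ∑ i, (mB.X i + mB.Y i) := by omega
    have h3 := (Finset.sum_eq_sum_iff_of_le
      (fun i (_ : i ∈ Finset.univ) => by have := hle.1 i; have := hle.2 i; omega)).mp h2
    have hAB : mA = mB := by
      apply Mk.ext'
      · funext i
        have := h3 i (Finset.mem_univ i)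
        have := hle.1 i; have := hle.2 i
        omega
      · funext i
        have := h3 i (Finset.mem_univ i)
        have := hle.1 i; have := hle.2 i
        omega
    rw [hAB]
    exact Relation.ReflTransGen.refl
  | succ N ih =>
    intro mA mB hle hsum
    by_cases heq : mA = mB
    · rw [heq]; exact Relation.ReflTransGen.refl
    by_cases hYeq : mA.Y = mB.Y
    · -- increase an X entry
      have hXne : mA.X ≠ mB.X := fun h => heq (Mk.ext' h hYeq)
      have hTne : (Finset.univ.filter (fun t => mA.X t < mB.X t)).Nonempty := by
        obtain ⟨t, ht⟩ := Function.ne_iff.mp hXne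
        exact ⟨t, Finset.mem_filter.mpr ⟨Finset.mem_univ t,
          lt_of_le_of_ne (hle.1 t) ht⟩⟩
      set t := (Finset.univ.filter (fun t => mA.X t < mB.X t)).max' hTne with htdef
      have ht : mA.X t < mB.X t :=
        (Finset.mem_filter.mp ((Finset.univ.filter (fun t => mA.X t < mB.X t)).max'_mem hTne)).2
      have hmax : ∀ s : Fin k, t < s → mA.X s = mB.X s := by
        intro s hs
        by_contra hne
        have hsT : s ∈ Finset.univ.filter (fun t => mA.X t < mB.X t) :=
          Finset.mem_filter.mpr ⟨Finset.mem_univ s, lt_of_le_of_ne (hle.1 s) hne⟩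
        have := Finset.le_max' _ s hsT
        rw [← htdef] at this
        exact absurd hs (not_lt_of_ge this)
      set x' := dite (t.val + 1 < k) (fun h => min (mB.X t) (mA.X ⟨t.val + 1, h⟩ - 1))
        (fun _ => mB.X t) with hx'def
      have hx'gt : mA.X t < x' := by
        rw [hx'def]
        by_cases h : t.val + 1 < k
        · rw [dif_pos h]
          have h1 : mA.X ⟨t.val + 1, h⟩ = mB.X ⟨t.val + 1, h⟩ :=
            hmax _ (by simp [Fin.lt_def])
          have h2 : mB.X t < mB.X ⟨t.val + 1, h⟩ := mB.hX (by simp [Fin.lt_def])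
          omega
        · rw [dif_neg h]; exact ht
      have hx'le : x' ≤ mB.X t := by
        rw [hx'def]
        by_cases h : t.val + 1 < k
        · rw [dif_pos h]; exact min_le_left _ _
        · rw [dif_neg h]
      have hx'next : ∀ s : Fin k, t < s → x' < mA.X s := by
        intro s hs
        have hk : t.val + 1 < k := by
          have := s.2
          have := Fin.lt_def.mp hs
          omega
        rw [hx'def, dif_pos hk]
        have h1 : mA.X ⟨t.val + 1, hk⟩ ≤ mA.X s := mA.hX.monotone (by
          simp only [Fin.le_def]
          exact Fin.lt_def.mp hs)
        have h2 := mA.X_pos ⟨t.val + 1, hk⟩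
        omega
      set X' := Function.update mA.X t x' with hX'def
      have hX'apply : ∀ i, X' i = if i = t then x' else mA.X i := by
        intro i
        rw [hX'def, Function.update_apply]
      have hX'mono : StrictMono X' := by
        intro i j hij
        rw [hX'apply, hX'apply]
        rcases eq_or_ne i t with rfl | hi
        · rw [if_pos rfl, if_neg (by intro h; rw [h] at hij; exact lt_irrefl _ hij)]
          exact hx'next j hij
        · rw [if_neg hi]
          rcases eq_or_ne j t with rfl | hj
          · rw [if_pos rfl]
            exact lt_trans (mA.hX hij) hx'gt
          · rw [if_neg hj]
            exact mA.hX hij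
      have hX'bounds : ∀ i, 1 ≤ X' i ∧ X' i ≤ a := by
        intro i
        show 1 ≤ X' i ∧ X' i ≤ a
        rw [hX'apply]
        rcases eq_or_ne i t with rfl | hi
        · rw [if_pos rfl]
          have := mA.X_pos t
          have := mB.X_le t
          omega
        · rw [if_neg hi]
          exact ⟨mA.X_pos i, mA.X_le i⟩
      set mA' : Mk a b k := ⟨(X', mA.Y), hX'mono, mA.hY, hX'bounds, mA.prop.2.2.2⟩
        with hmA'def
      have hmX : mA'.X = X' := by rw [hmA'def]; rfl
      have hmY : mA'.Y = mA.Y := by rw [hmA'def]; rfl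
      have hprec : PrecK (decA mA) (decA mA') := by
        apply prec_of_update mA mA' t
        · intro i hi
          refine ⟨?_, (congrFun hmY i).symm⟩
          rw [hmX, hX'apply, if_neg hi]
        · rw [hmX, hX'apply, if_pos rfl]
          exact le_of_lt hx'gt
        · rw [hmY]
        · intro h
          have h1 : mA.X t = mA'.X t := congrArg Prod.fst h
          rw [hmX, hX'apply, if_pos rfl] at h1
          omega
      have hle' : mA' ≤ mB := by
        rw [Mk.le_def]
        constructor
        · intro i
          rw [hmX, hX'apply]
          rcases eq_or_ne i t with rfl | hi
          · rw [if_pos rfl]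
            exact hx'le
          · rw [if_neg hi]
            exact hle.1 i
        · intro i
          rw [hmY]
          exact hle.2 i
      have hsum' : ∑ i, (mB.X i + mB.Y i) ≤ ∑ i, (mA'.X i + mA'.Y i) + N := by
        have hs1 : ∑ i, (mA'.X i + mA'.Y i) = ∑ i, X' i + ∑ i, mA.Y i := by
          simp only [hmX, hmY]
          rw [Finset.sum_add_distrib]
        have hs2 : ∑ i, (mA.X i + mA.Y i) = ∑ i, mA.X i + ∑ i, mA.Y i :=
          Finset.sum_add_distrib
        have hs3 : ∑ i, mA.X i + 1 ≤ ∑ i, X' i := by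
          rw [hX'def]
          exact sum_lt_update hx'gt
        omega
      exact Relation.ReflTransGen.head hprec (ih mA' mB hle' hsum')
    · -- increase a Y entry
      have hTne : (Finset.univ.filter (fun t => mA.Y t < mB.Y t)).Nonempty := by
        obtain ⟨t, ht⟩ := Function.ne_iff.mp hYeq
        exact ⟨t, Finset.mem_filter.mpr ⟨Finset.mem_univ t,
          lt_of_le_of_ne (hle.2 t) ht⟩⟩
      set t := (Finset.univ.filter (fun t => mA.Y t < mB.Y t)).min' hTne with htdef
      have ht : mA.Y t < mB.Y t :=
        (Finset.mem_filter.mp ((Finset.univ.filter (fun t => mA.Y t < mB.Y t)).min'_mem hTne)).2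
      have hmin : ∀ s : Fin k, s < t → mA.Y s = mB.Y s := by
        intro s hs
        by_contra hne
        have hsT : s ∈ Finset.univ.filter (fun t => mA.Y t < mB.Y t) :=
          Finset.mem_filter.mpr ⟨Finset.mem_univ s, lt_of_le_of_ne (hle.2 s) hne⟩
        have := Finset.min'_le _ s hsT
        rw [← htdef] at this
        exact absurd hs (not_lt_of_ge this)
      set y' := dite (0 < t.val) (fun h => min (mB.Y t) (mA.Y ⟨t.val - 1, by have := t.2; omega⟩ - 1))
        (fun _ => mB.Y t) with hy'def
      have hy'gt : mA.Y t < y' := by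
        rw [hy'def]
        by_cases h : 0 < t.val
        · rw [dif_pos h]
          have h1 : mA.Y ⟨t.val - 1, by have := t.2; omega⟩ = mB.Y ⟨t.val - 1, by have := t.2; omega⟩ :=
            hmin _ (by simp [Fin.lt_def]; omega)
          have h2 : mB.Y t < mB.Y ⟨t.val - 1, by have := t.2; omega⟩ :=
            mB.hY (by simp [Fin.lt_def]; omega)
          omega
        · rw [dif_neg h]; exact ht
      have hy'le : y' ≤ mB.Y t := by
        rw [hy'def]
        by_cases h : 0 < t.val
        · rw [dif_pos h]; exact min_le_left _ _
        · rw [dif_neg h]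
      have hy'prev : ∀ s : Fin k, s < t → y' < mA.Y s := by
        intro s hs
        have hk : 0 < t.val := by
          have := Fin.lt_def.mp hs
          omega
        rw [hy'def, dif_pos hk]
        have h1 : mA.Y ⟨t.val - 1, by have := t.2; omega⟩ ≤ mA.Y s := mA.hY.antitone (by
          simp only [Fin.le_def]
          have := Fin.lt_def.mp hs
          omega)
        have h2 := mA.Y_pos (⟨t.val - 1, by have := t.2; omega⟩ : Fin k)
        omega
      set Y' := Function.update mA.Y t y' with hY'def
      have hY'apply : ∀ i, Y' i = if i = t then y' else mA.Y i := by
        intro i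
        rw [hY'def, Function.update_apply]
      have hY'anti : StrictAnti Y' := by
        intro i j hij
        rw [hY'apply, hY'apply]
        rcases eq_or_ne j t with rfl | hj
        · rw [if_pos rfl, if_neg (by intro h; rw [h] at hij; exact lt_irrefl _ hij)]
          exact hy'prev i hij
        · rw [if_neg hj]
          rcases eq_or_ne i t with rfl | hi
          · rw [if_pos rfl]
            exact lt_trans (mA.hY hij) hy'gt
          · rw [if_neg hi]
            exact mA.hY hij
      have hY'bounds : ∀ i, 1 ≤ Y' i ∧ Y' i ≤ b := by
        intro i
        show 1 ≤ Y' i ∧ Y' i ≤ b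
        rw [hY'apply]
        rcases eq_or_ne i t with rfl | hi
        · rw [if_pos rfl]
          have := mA.Y_pos t
          have := mB.Y_le t
          omega
        · rw [if_neg hi]
          exact ⟨mA.Y_pos i, mA.Y_le i⟩
      set mA' : Mk a b k := ⟨(mA.X, Y'), mA.hX, hY'anti, mA.prop.2.2.1, hY'bounds⟩
        with hmA'def
      have hmX : mA'.X = mA.X := by rw [hmA'def]; rfl
      have hmY : mA'.Y = Y' := by rw [hmA'def]; rfl
      have hprec : PrecK (decA mA) (decA mA') := by
        apply prec_of_update mA mA' t
        · intro i hi
          refine ⟨(congrFun hmX i).symm, ?_⟩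
          rw [hmY, hY'apply, if_neg hi]
        · rw [hmX]
        · rw [hmY, hY'apply, if_pos rfl]
          exact le_of_lt hy'gt
        · intro h
          have h1 : mA.Y t = mA'.Y t := congrArg Prod.snd h
          rw [hmY, hY'apply, if_pos rfl] at h1
          omega
      have hle' : mA' ≤ mB := by
        rw [Mk.le_def]
        constructor
        · intro i
          rw [hmX]
          exact hle.1 i
        · intro i
          rw [hmY, hY'apply]
          rcases eq_or_ne i t with rfl | hi
          · rw [if_pos rfl]
            exact hy'le
          · rw [if_neg hi]
            exact hle.2 i
      have hsum' : ∑ i, (mB.X i + mB.Y i) ≤ ∑ i, (mA'.X i + mA'.Y i) + N := by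
        have hs1 : ∑ i, (mA'.X i + mA'.Y i) = ∑ i, mA.X i + ∑ i, Y' i := by
          simp only [hmX, hmY]
          rw [Finset.sum_add_distrib]
        have hs2 : ∑ i, (mA.X i + mA.Y i) = ∑ i, mA.X i + ∑ i, mA.Y i :=
          Finset.sum_add_distrib
        have hs3 : ∑ i, mA.Y i + 1 ≤ ∑ i, Y' i := by
          rw [hY'def]
          exact sum_lt_update hy'gt
        omega
      exact Relation.ReflTransGen.head hprec (ih mA' mB hle' hsum')

lemma le_iff_encM (A B : AkSet (Box a b) k) : A ≤ B ↔ encM A ≤ encM B := by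
  constructor
  · exact leK_imp_le
  · intro h
    have h2 := step_main (∑ i, ((encM B).X i + (encM B).Y i)) (encM A) (encM B) h (by omega)
    rw [decA_encM, decA_encM] at h2
    exact h2

noncomputable def e1 : AkSet (Box a b) k ≃o Mk a b k where
  toFun := encM
  invFun := decA
  left_inv := decA_encM
  right_inv := encM_decA
  map_rel_iff' := by
    intro A B
    exact (le_iff_encM A B).symm

end Anti

end Stmt15

/-- For `k ≤ min(a,b)`, the poset `(A_k([a] × [b]), ≤_k)` of `k`-element antichains
of `[a] × [b]` is isomorphic to the poset `D_k(a,b)` of Ferrers diagrams of Durfee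
length exactly `k` contained in `[a] × [b]`, ordered by inclusion. -/
theorem stmt15 (a b k : ℕ) (hk : k ≤ min a b) :
    Nonempty (AkSet (Box a b) k ≃o DkP a b k) := by
  exact ⟨Stmt15.e1.trans Stmt15.e2⟩
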